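/- Let |+_r⟩ = (1/√r)∑_{i=0}^{r−1}|ii⟩ be the rank-r maximally entangled state and 1 ≤ k < r. Then the 2×2 Hankel matrix B_3 = [[q_1, q_2],[q_2, q_3]], built from the moments q_n = Tr(R_k(+_r)^n) with R_k(+_r) = k ρ_A ⊗ I_B − |+_r⟩⟨+_r|, is not positive semidefinite. -/

import Mathlib

open Matrix Kronecker

/-- Partial trace over the second factor (real matrices). -/
noncomputable def ptraceBR (dA dB : ℕ) (ρ : Matrix (Fin dA × Fin dB) (Fin dA × Fin dB) ℝ) :
    Matrix (Fin dA) (Fin dA) ℝ :=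
  fun a a' => ∑ b, ρ (a, b) (a', b)

/-- The rank-`r` maximally entangled state `|+_r⟩ = (1/√r) ∑_{i<r} |ii⟩`. -/
noncomputable def plusStateR (dA dB r : ℕ) : Fin dA × Fin dB → ℝ :=
  fun p => if (p.1 : ℕ) = (p.2 : ℕ) ∧ (p.1 : ℕ) < r then 1 / Real.sqrt r else 0

lemma count_aux (dA r : ℕ) (hrdA : r ≤ dA) (x : ℝ) :
    ∑ a : Fin dA, (if (a:ℕ) < r then x else 0) = r * x := by
  rw [Fin.sum_univ_eq_sum_range (fun i => if i < r then x else 0)]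
  rw [← Finset.sum_subset (Finset.range_subset_range.2 hrdA)
    (fun i _ hi => if_neg (by simp at hi ⊢; omega))]
  rw [Finset.sum_congr rfl (fun i hi => if_pos (Finset.mem_range.1 hi))]
  simp [mul_comm]

lemma psi_sum (dA dB r : ℕ) (hr0 : 0 < r) (hrdA : r ≤ dA) (hdAdB : dA ≤ dB) (a a' : Fin dA) :
    ∑ c : Fin dB, plusStateR dA dB r (a, c) * plusStateR dA dB r (a', c) =
      if a = a' ∧ (a : ℕ) < r then (1 / r : ℝ) else 0 := by
  by_cases h : a = a' ∧ (a : ℕ) < r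
  · obtain ⟨rfl, har⟩ := h
    have hadB : (a : ℕ) < dB := lt_of_lt_of_le (lt_of_lt_of_le a.2 hdAdB) le_rfl
    rw [if_pos ⟨rfl, har⟩]
    rw [Finset.sum_eq_single (⟨a, hadB⟩ : Fin dB)]
    · have hv : plusStateR dA dB r (a, ⟨a, hadB⟩) = 1 / Real.sqrt r := by
        simp [plusStateR, har]
      rw [hv, div_mul_div_comm, one_mul, Real.mul_self_sqrt (Nat.cast_nonneg r)]
    · intro c _ hc
      simp only [plusStateR]
      rw [if_neg, zero_mul]
      rintro ⟨h1, -⟩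
      exact hc (Fin.ext h1.symm)
    · simp
  · rw [if_neg h]
    apply Finset.sum_eq_zero
    intro c _
    simp only [plusStateR]
    split_ifs with h1 h2
    · exact absurd ⟨Fin.ext (h1.1.trans h2.1.symm), h1.2⟩ h
    all_goals simp

set_option maxHeartbeats 1000000 in
theorem stmt15 (dA dB r k : ℕ) (hk : 1 ≤ k) (hkr : k < r)
    (hrdA : r ≤ dA) (hdAdB : dA ≤ dB)
    (R : Matrix (Fin dA × Fin dB) (Fin dA × Fin dB) ℝ)
    (hRdef : R = (k : ℝ) • (ptraceBR dA dB
        (Matrix.vecMulVec (plusStateR dA dB r) (plusStateR dA dB r))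
          ⊗ₖ (1 : Matrix (Fin dB) (Fin dB) ℝ))
      - Matrix.vecMulVec (plusStateR dA dB r) (plusStateR dA dB r))
    (q : ℕ → ℝ) (hq : ∀ n, q n = (R ^ n).trace) :
    ¬ (!![q 1, q 2; q 2, q 3]).PosSemidef := by
  have hr0 : 0 < r := lt_of_le_of_lt (Nat.zero_le _) hkr
  have hrR : (0:ℝ) < r := Nat.cast_pos.2 hr0
  set ψ := plusStateR dA dB r with hψ
  set b : ℝ := (k : ℝ) / r with hb
  set d : Fin dA × Fin dB → ℝ := fun p => if (p.1 : ℕ) < r then 1 else 0 with hd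
  set Q : Matrix (Fin dA × Fin dB) (Fin dA × Fin dB) ℝ := Matrix.diagonal d with hQ
  set P : Matrix (Fin dA × Fin dB) (Fin dA × Fin dB) ℝ := Matrix.vecMulVec ψ ψ with hP
  -- R = b • Q - P
  have hR : R = b • Q - P := by
    rw [hRdef]
    congr 1
    ext ⟨a, c⟩ ⟨a', c'⟩
    simp only [Matrix.smul_apply, Matrix.kroneckerMap_apply, ptraceBR, hP,
      Matrix.vecMulVec_apply, hQ, Matrix.diagonal_apply, smul_eq_mul]
    rw [show (∑ x : Fin dB, ψ (a, x) * ψ (a', x)) =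
        if a = a' ∧ (a:ℕ) < r then (1/r : ℝ) else 0 from psi_sum dA dB r hr0 hrdA hdAdB a a']
    by_cases h1 : a = a' ∧ (a:ℕ) < r
    · obtain ⟨rfl, har⟩ := h1
      rw [if_pos ⟨rfl, har⟩]
      by_cases h2 : c = c'
      · subst h2
        rw [if_pos rfl, hd]
        simp [Matrix.one_apply, har, hb]
        ring
      · rw [if_neg (by simp [h2] : ¬ ((a,c) = (a,c'))), Matrix.one_apply_ne h2]
        ring
    · rw [if_neg h1]
      by_cases h2 : (a, c) = (a', c')
      · have ha : a = a' := congrArg Prod.fst h2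
        have hnr : ¬ (a : ℕ) < r := fun hl => h1 ⟨ha, hl⟩
        rw [if_pos h2]
        simp [hd, hnr]
      · rw [if_neg h2]
        ring
  have hpsum : ∀ a a' : Fin dA, ∑ c : Fin dB, ψ (a, c) * ψ (a', c) =
      if a = a' ∧ (a : ℕ) < r then (1 / r : ℝ) else 0 := psi_sum dA dB r hr0 hrdA hdAdB
  -- algebra facts
  have hQQ : Q * Q = Q := by
    rw [hQ, Matrix.diagonal_mul_diagonal]
    have hdd : (fun i => d i * d i) = d := by
      funext p
      simp only [hd]
      by_cases h : (p.1 : ℕ) < r <;> simp [h]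
    rw [hdd]
  have hpsi_norm : ∑ p : Fin dA × Fin dB, ψ p * ψ p = 1 := by
    rw [Fintype.sum_prod_type]
    calc ∑ a : Fin dA, ∑ c : Fin dB, ψ (a, c) * ψ (a, c)
        = ∑ a : Fin dA, (if (a:ℕ) < r then (1/r : ℝ) else 0) := by
          refine Finset.sum_congr rfl fun a _ => ?_
          rw [hpsum a a]
          by_cases h : (a:ℕ) < r <;> simp [h]
      _ = 1 := by rw [count_aux dA r hrdA]; field_simp
  have hPP : P * P = P := by
    ext p p'
    simp only [hP, Matrix.mul_apply, Matrix.vecMulVec_apply]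
    calc ∑ x, ψ p * ψ x * (ψ x * ψ p') = (ψ p * ψ p') * ∑ x, ψ x * ψ x := by
          rw [Finset.mul_sum]; exact Finset.sum_congr rfl fun x _ => by ring
      _ = ψ p * ψ p' := by rw [hpsi_norm, mul_one]
  have hdpsi : ∀ p, d p * ψ p = ψ p := by
    intro p
    by_cases h : (p.1 : ℕ) < r
    · simp [hd, h]
    · have : ψ p = 0 := by
        simp only [hψ, plusStateR]
        rw [if_neg]
        rintro ⟨-, h2⟩; exact h h2
      simp [this]
  have hQP : Q * P = P := by
    ext p p'
    rw [hQ, hP, Matrix.diagonal_mul, Matrix.vecMulVec_apply, ← mul_assoc, hdpsi]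
  have hPQ : P * Q = P := by
    ext p p'
    rw [hQ, hP, Matrix.mul_diagonal, Matrix.vecMulVec_apply, mul_assoc,
      mul_comm (ψ p') (d p'), hdpsi]
  -- traces
  have htrQ : Q.trace = (r : ℝ) * dB := by
    rw [hQ, Matrix.trace_diagonal, Fintype.sum_prod_type]
    calc ∑ a : Fin dA, ∑ _c : Fin dB, d (a, _c)
        = ∑ a : Fin dA, (if (a:ℕ) < r then ((dB : ℝ)) else 0) := by
          refine Finset.sum_congr rfl fun a _ => ?_
          simp only [hd]
          by_cases h : (a:ℕ) < r <;> simp [h]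
      _ = (r : ℝ) * dB := count_aux dA r hrdA _
  have htrP : P.trace = 1 := by
    rw [hP, Matrix.trace]
    simpa [Matrix.diag, Matrix.vecMulVec_apply] using hpsi_norm
  -- powers
  have hR2 : R ^ 2 = (b * b) • Q + (1 - 2 * b) • P := by
    rw [pow_two, hR]
    simp only [sub_mul, mul_sub, smul_mul_assoc, mul_smul_comm, hQQ, hQP, hPQ, hPP, smul_smul]
    module
  have hR3 : R ^ 3 = (b * b * b) • Q + (-(3 * b * b) + 3 * b - 1) • P := by
    rw [pow_succ, hR2, hR]
    simp only [add_mul, mul_sub, sub_mul, smul_mul_assoc, mul_smul_comm, hQQ, hQP, hPQ, hPP,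
      smul_smul]
    module
  set T : ℝ := (r : ℝ) * dB with hT
  have hq1 : q 1 = b * T - 1 := by
    rw [hq 1, pow_one, hR, Matrix.trace_sub, Matrix.trace_smul, htrQ, htrP, smul_eq_mul]
  have hq2 : q 2 = b * b * T + (1 - 2 * b) := by
    rw [hq 2, hR2, Matrix.trace_add, Matrix.trace_smul, Matrix.trace_smul, htrQ, htrP,
      smul_eq_mul, smul_eq_mul, mul_one]
  have hq3 : q 3 = b * b * b * T + (-(3 * b * b) + 3 * b - 1) := by
    rw [hq 3, hR3, Matrix.trace_add, Matrix.trace_smul, Matrix.trace_smul, htrQ, htrP,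
      smul_eq_mul, smul_eq_mul, mul_one]
  -- numeric facts
  have hb0 : 0 < b := div_pos (by exact_mod_cast hk) hrR
  have hb1 : b < 1 := (div_lt_one hrR).2 (by exact_mod_cast hkr)
  have h2r : 2 ≤ r := hk.trans_lt hkr
  have h2dB : 2 ≤ dB := h2r.trans (hrdA.trans hdAdB)
  have h2rR : (2:ℝ) ≤ r := by exact_mod_cast h2r
  have h2dBR : (2:ℝ) ≤ dB := by exact_mod_cast h2dB
  have hT4 : (4 : ℝ) ≤ T := by rw [hT]; nlinarith
  have hbT : b * T = (k : ℝ) * dB := by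
    rw [hb, hT]; field_simp
  have hkR : (1:ℝ) ≤ k := by exact_mod_cast hk
  -- q1 > 0
  have hq1pos : 0 < q 1 := by
    rw [hq1]
    nlinarith
  -- determinant negative
  have hdet : q 1 * q 3 - q 2 * q 2 = (T - 1) * b * (b - 1) := by
    rw [hq1, hq2, hq3]; ring
  have hdetneg : q 1 * q 3 - q 2 * q 2 < 0 := by
    rw [hdet]
    have h1 : 0 < T - 1 := by linarith
    have h2 : b - 1 < 0 := by linarith
    nlinarith
  -- conclude
  intro hM
  have hpsd := hM.dotProduct_mulVec_nonneg
  have := hpsd ![q 2, -(q 1)]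
  simp only [star_trivial] at this
  have hval : dotProduct ![q 2, -(q 1)] ((!![q 1, q 2; q 2, q 3]) *ᵥ ![q 2, -(q 1)]) =
      q 1 * (q 1 * q 3 - q 2 * q 2) := by
    simp [dotProduct, Matrix.mulVec, Fin.sum_univ_two]
    ring
  rw [hval] at this
  nlinarith
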